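/- Let G be an abelian group and let A be a finite nonempty subset satisfying |A - 2·A| ≤ L|A|, where 2·A := {2a : a ∈ A}. Then for every positive integer k, |A - 2^k·A| ≤ L^k |A|. -/
import Mathlib


open Finset Pointwise

/-- Key combinatorial step: `|A - 2^{k+1}·A| * |A| ≤ |A - 2·A| * |A - 2^k·A|`,
via the injection `(d, b) ↦ (a_d - 2b, b - 2^k c_d)` where `d = a_d - 2^{k+1} c_d`. -/
lemma stmt5_key {G : Type*} [AddCommGroup G] [DecidableEq G] (A : Finset G) (k : ℕ) :
    (A - A.image (fun a => ((2 : ℤ) ^ (k + 1)) • a)).card * A.card ≤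
      (A - A.image (fun a => (2 : ℤ) • a)).card *
        (A - A.image (fun a => ((2 : ℤ) ^ k) • a)).card := by
  classical
  set D := A - A.image (fun a => ((2 : ℤ) ^ (k + 1)) • a) with hD
  have hchoice : ∀ d : G, ∃ a c : G,
      d ∈ D → (a ∈ A ∧ c ∈ A ∧ d = a - ((2 : ℤ) ^ (k + 1)) • c) := by
    intro d
    by_cases hd : d ∈ D
    · obtain ⟨x, hx, y, hy, hxy⟩ := Finset.mem_sub.1 hd
      obtain ⟨c, hc, hcy⟩ := Finset.mem_image.1 hy
      exact ⟨x, c, fun _ => ⟨hx, hc, by rw [← hxy, hcy]⟩⟩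
    · exact ⟨0, 0, fun hmem => absurd hmem hd⟩
  choose a c hac using hchoice
  have key := Finset.card_le_card_of_injOn
    (s := D ×ˢ A)
    (t := (A - A.image (fun a => (2 : ℤ) • a)) ×ˢ (A - A.image (fun a => ((2 : ℤ) ^ k) • a)))
    (fun p => (a p.1 - (2 : ℤ) • p.2, p.2 - ((2 : ℤ) ^ k) • c p.1))
    ?_ ?_
  · simpa [Finset.card_product, mul_comm] using key
  · rintro ⟨d, b⟩ hp
    obtain ⟨hd, hb⟩ := Finset.mem_product.1 hp
    obtain ⟨ha', hc', -⟩ := hac d hd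
    refine Finset.mem_product.2 ⟨?_, ?_⟩
    · exact Finset.mem_sub.2 ⟨a d, ha', (2 : ℤ) • b, Finset.mem_image_of_mem _ hb, rfl⟩
    · exact Finset.mem_sub.2 ⟨b, hb, ((2 : ℤ) ^ k) • c d, Finset.mem_image_of_mem _ hc', rfl⟩
  · rintro ⟨d, b⟩ hp ⟨d', b'⟩ hp' heq
    simp only [Finset.coe_product, Set.mem_prod, Finset.mem_coe] at hp hp'
    obtain ⟨-, -, hrep⟩ := hac d hp.1
    obtain ⟨-, -, hrep'⟩ := hac d' hp'.1
    have h1 : a d - (2 : ℤ) • b = a d' - (2 : ℤ) • b' := congrArg Prod.fst heq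
    have h2 : b - ((2 : ℤ) ^ k) • c d = b' - ((2 : ℤ) ^ k) • c d' := congrArg Prod.snd heq
    have gen : ∀ x y z : G, (x - (2 : ℤ) • y) + (2 : ℤ) • (y - ((2 : ℤ) ^ k) • z)
        = x - ((2 : ℤ) ^ (k + 1)) • z := by
      intro x y z
      rw [smul_sub, smul_smul, show (2 : ℤ) * 2 ^ k = 2 ^ (k + 1) by ring]
      abel
    have hdd : d = d' := by
      have e1 : d = (a d - (2 : ℤ) • b) + (2 : ℤ) • (b - ((2 : ℤ) ^ k) • c d) := by
        rw [gen]; exact hrep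
      have e2 : d' = (a d' - (2 : ℤ) • b') + (2 : ℤ) • (b' - ((2 : ℤ) ^ k) • c d') := by
        rw [gen]; exact hrep'
      rw [e1, e2, h1, h2]
    have hbb : b = b' := by
      have h2' := h2
      rw [hdd] at h2'
      exact sub_left_inj.1 h2'
    exact Prod.ext hdd hbb

/-- If `|A - 2·A| ≤ L|A|` then `|A - 2^k·A| ≤ L^k|A|` for every positive integer `k`. -/
theorem stmt5 {G : Type*} [AddCommGroup G] [DecidableEq G] (A : Finset G) (hA : A.Nonempty)
    (L : ℝ) (h : ((A - A.image (fun a => (2 : ℤ) • a)).card : ℝ) ≤ L * A.card)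
    (k : ℕ) (hk : 1 ≤ k) :
    ((A - A.image (fun a => ((2 : ℤ) ^ k) • a)).card : ℝ) ≤ L ^ k * A.card := by
  have hApos : (0 : ℝ) < A.card := by
    exact_mod_cast Finset.card_pos.2 hA
  induction k, hk using Nat.le_induction with
  | base =>
    have himg : A.image (fun a => ((2 : ℤ) ^ 1) • a) = A.image (fun a => (2 : ℤ) • a) := by
      simp [pow_one]
    rw [himg, pow_one]
    exact h
  | succ k hk ih =>
    have hkey := stmt5_key A k
    have hkeyR : ((A - A.image (fun a => ((2 : ℤ) ^ (k + 1)) • a)).card : ℝ) * A.card ≤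
        ((A - A.image (fun a => (2 : ℤ) • a)).card : ℝ) *
          ((A - A.image (fun a => ((2 : ℤ) ^ k) • a)).card : ℝ) := by
      exact_mod_cast hkey
    have hbound : ((A - A.image (fun a => ((2 : ℤ) ^ (k + 1)) • a)).card : ℝ) * A.card ≤
        (L * A.card) * (L ^ k * A.card) := by
      refine hkeyR.trans (mul_le_mul h ih (by positivity) ?_)
      have : (1 : ℝ) ≤ (A - A.image (fun a => (2 : ℤ) • a)).card := by
        have : (A - A.image (fun a => (2 : ℤ) • a)).Nonempty :=
          hA.sub (hA.image _)
        exact_mod_cast Finset.card_pos.2 this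
      linarith [h, hApos]
    have : ((A - A.image (fun a => ((2 : ℤ) ^ (k + 1)) • a)).card : ℝ) * A.card ≤
        (L ^ (k + 1) * A.card) * A.card := by
      calc _ ≤ (L * A.card) * (L ^ k * A.card) := hbound
        _ = (L ^ (k + 1) * A.card) * A.card := by ring
    exact le_of_mul_le_mul_right this hApos
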